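/- The functional Γ_p satisfies the triangle inequality with respect to Minkowski sums: for any bounded sets K, L ⊆ ℝ^d and p ∈ [2, ∞], Γ_p(K + L) ≤ Γ_p(K) + Γ_p(L). -/

import Mathlib

open scoped ENNReal Pointwise
open MeasureTheory ProbabilityTheory Matrix Set Bornology

/-- The `ℓ_p` norm of a finite-dimensional real vector, `p ∈ [1,∞]`. -/
noncomputable def pnorm (p : ℝ≥0∞) {ι : Type*} [Fintype ι] (x : ι → ℝ) : ℝ :=
  if p = ∞ then ⨆ i, |x i| else (∑ i, |x i| ^ p.toReal) ^ (1 / p.toReal)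

/-- `tr_p M`: the `ℓ_p` norm of the diagonal of a square matrix. -/
noncomputable def trp (p : ℝ≥0∞) {ι : Type*} [Fintype ι] (M : Matrix ι ι ℝ) : ℝ :=
  pnorm p (fun i => M i i)

/-- The closed Euclidean unit ball. -/
def ball2 (ι : Type*) [Fintype ι] : Set (ι → ℝ) := {x | ∑ i, (x i) ^ 2 ≤ 1}

/-- `Γ_p(K) = inf { sqrt(tr_{p/2}(A Aᵀ)) : ∃ v, K + v ⊆ A · B₂ }`. -/
noncomputable def Gamma (p : ℝ≥0∞) {ι : Type*} [Fintype ι] [DecidableEq ι]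
    (K : Set (ι → ℝ)) : ℝ :=
  sInf {r : ℝ | ∃ A : Matrix ι ι ℝ,
    r = Real.sqrt (trp (p / 2) (A * Aᵀ)) ∧
    ∃ v : ι → ℝ, (fun x => x + v) '' K ⊆ (fun x => A.mulVec x) '' ball2 ι}

/-- The support function `h_K(θ) = sup_{x ∈ K} ⟨x, θ⟩`. -/
noncomputable def suppFn {ι : Type*} [Fintype ι] (K : Set (ι → ℝ)) (θ : ι → ℝ) : ℝ :=
  sSup ((fun x => ∑ i, x i * θ i) '' K)

/-- The width function `w_K(θ) = sup_{x ∈ K} ⟨x, θ⟩ - inf_{x ∈ K} ⟨x, θ⟩`. -/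
noncomputable def widthFn {ι : Type*} [Fintype ι] (K : Set (ι → ℝ)) (θ : ι → ℝ) : ℝ :=
  sSup ((fun x => ∑ i, x i * θ i) '' K) - sInf ((fun x => ∑ i, x i * θ i) '' K)

/-! ### Auxiliary lemmas -/

section Aux

lemma pnorm_eq_norm (q : ℝ≥0∞) [Fact (1 ≤ q)] {ι : Type*} [Fintype ι] (x : ι → ℝ) :
    pnorm q x = ‖(WithLp.equiv q (ι → ℝ)).symm x‖ := by
  unfold pnorm
  rcases eq_or_ne q ∞ with h | h
  · subst h
    rw [if_pos rfl, PiLp.norm_eq_ciSup]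
    simp [Real.norm_eq_abs]
  · have h1 : (1:ℝ≥0∞) ≤ q := Fact.out
    have hq0 : 0 < q.toReal := ENNReal.toReal_pos (by rintro rfl; simp at h1) h
    rw [if_neg h, PiLp.norm_eq_sum hq0]
    simp [Real.norm_eq_abs]

lemma pnorm_nonneg (q : ℝ≥0∞) [Fact (1 ≤ q)] {ι : Type*} [Fintype ι] (x : ι → ℝ) :
    0 ≤ pnorm q x := by rw [pnorm_eq_norm]; exact norm_nonneg _

lemma pnorm_combine (q : ℝ≥0∞) [Fact (1 ≤ q)] {ι : Type*} [Fintype ι]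
    {a b : ℝ} (ha : 0 ≤ a) (hb : 0 ≤ b) (x y : ι → ℝ) :
    pnorm q (fun i => a * x i + b * y i) ≤ a * pnorm q x + b * pnorm q y := by
  rw [pnorm_eq_norm, pnorm_eq_norm, pnorm_eq_norm]
  have : (WithLp.equiv q (ι → ℝ)).symm (fun i => a * x i + b * y i)
      = a • (WithLp.equiv q (ι → ℝ)).symm x + b • (WithLp.equiv q (ι → ℝ)).symm y := rfl
  rw [this]
  calc ‖_‖ ≤ ‖a • (WithLp.equiv q (ι → ℝ)).symm x‖ + ‖b • (WithLp.equiv q (ι → ℝ)).symm y‖ :=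
        norm_add_le _ _
    _ = a * ‖_‖ + b * ‖_‖ := by
        rw [norm_smul, norm_smul, Real.norm_of_nonneg ha, Real.norm_of_nonneg hb]

variable {d : ℕ}

lemma quad (A : Matrix (Fin d) (Fin d) ℝ) (θ : Fin d → ℝ) :
    θ ⬝ᵥ ((A * Aᵀ) *ᵥ θ) = (Aᵀ *ᵥ θ) ⬝ᵥ (Aᵀ *ᵥ θ) := by
  rw [← Matrix.mulVec_mulVec, Matrix.dotProduct_mulVec, ← Matrix.mulVec_transpose]

lemma quad_nonneg (A : Matrix (Fin d) (Fin d) ℝ) (θ : Fin d → ℝ) :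
    0 ≤ θ ⬝ᵥ ((A * Aᵀ) *ᵥ θ) := by
  rw [quad]
  exact Finset.sum_nonneg fun i _ => mul_self_nonneg _

lemma ball2_eq :
    ball2 (Fin d)
      = (PiLp.continuousLinearEquiv 2 ℝ (fun _ : Fin d => ℝ)) '' Metric.closedBall 0 1 := by
  ext x
  constructor
  · intro hx
    refine ⟨(PiLp.continuousLinearEquiv 2 ℝ (fun _ : Fin d => ℝ)).symm x, ?_, rfl⟩
    rw [Metric.mem_closedBall, dist_zero_right]
    have : ‖(PiLp.continuousLinearEquiv 2 ℝ (fun _ : Fin d => ℝ)).symm x‖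
        = Real.sqrt (∑ i, x i ^ 2) := by
      rw [EuclideanSpace.norm_eq]
      congr 1
      refine Finset.sum_congr rfl fun i _ => ?_
      simp [sq_abs]
    rw [this]
    exact Real.sqrt_le_one.mpr hx
  · rintro ⟨y, hy, rfl⟩
    rw [Metric.mem_closedBall, dist_zero_right] at hy
    have hn : ‖y‖ = Real.sqrt (∑ i, (y i) ^ 2) := by
      rw [EuclideanSpace.norm_eq]
      refine congrArg _ (Finset.sum_congr rfl fun i _ => by simp [sq_abs])
    have h0 : (0:ℝ) ≤ ∑ i, (y i) ^ 2 := Finset.sum_nonneg fun i _ => sq_nonneg _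
    have : ∑ i, (y i) ^ 2 ≤ 1 := by
      have h1 : Real.sqrt (∑ i, (y i) ^ 2) ≤ 1 := hn ▸ hy
      nlinarith [Real.sq_sqrt h0, Real.sqrt_nonneg (∑ i, (y i) ^ 2)]
    simpa [ball2] using this

lemma ell_convex (A : Matrix (Fin d) (Fin d) ℝ) :
    Convex ℝ ((fun x => A.mulVec x) '' ball2 (Fin d)) := by
  rw [ball2_eq, ← Set.image_comp]
  have : ((fun x => A.mulVec x) ∘ (PiLp.continuousLinearEquiv 2 ℝ (fun _ : Fin d => ℝ)))
      = (A.mulVecLin.comp ((PiLp.continuousLinearEquiv 2 ℝ (fun _ : Fin d => ℝ)) :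
          EuclideanSpace ℝ (Fin d) →ₗ[ℝ] (Fin d → ℝ))) := rfl
  rw [this]
  exact (convex_closedBall _ _).linear_image _

lemma ell_isClosed (A : Matrix (Fin d) (Fin d) ℝ) :
    IsClosed ((fun x => A.mulVec x) '' ball2 (Fin d)) := by
  rw [ball2_eq, ← Set.image_comp]
  have hcont : Continuous ((fun x => A.mulVec x) ∘
      (PiLp.continuousLinearEquiv 2 ℝ (fun _ : Fin d => ℝ))) :=
    (A.mulVecLin.continuous_of_finiteDimensional).comp
      (PiLp.continuousLinearEquiv 2 ℝ (fun _ : Fin d => ℝ)).continuous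
  exact ((isCompact_closedBall _ _).image hcont).isClosed

lemma f_eq_dot (f : (Fin d → ℝ) →L[ℝ] ℝ) (y : Fin d → ℝ) :
    f y = y ⬝ᵥ (fun i => f (Pi.single i 1)) := by
  have hy : y = ∑ i, y i • (Pi.single i 1 : Fin d → ℝ) := by
    ext j
    simp [Pi.single_apply]
  calc f y = f (∑ i, y i • (Pi.single i 1 : Fin d → ℝ)) := by rw [← hy]
    _ = ∑ i, y i * f (Pi.single i 1) := by
        rw [map_sum]
        exact Finset.sum_congr rfl fun i _ => by rw [f.map_smul, smul_eq_mul]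
    _ = _ := rfl

lemma cs_step (A : Matrix (Fin d) (Fin d) ℝ) (θ u : Fin d → ℝ) (hu : u ∈ ball2 (Fin d)) :
    (A *ᵥ u) ⬝ᵥ θ ≤ Real.sqrt (θ ⬝ᵥ ((A * Aᵀ) *ᵥ θ)) := by
  set g := Aᵀ *ᵥ θ with hg
  have h1 : (A *ᵥ u) ⬝ᵥ θ = u ⬝ᵥ g := by
    rw [dotProduct_comm, Matrix.dotProduct_mulVec, ← Matrix.mulVec_transpose]
    exact dotProduct_comm _ _
  have hgg : θ ⬝ᵥ ((A * Aᵀ) *ᵥ θ) = ∑ i, g i ^ 2 := by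
    rw [quad]
    simp [dotProduct, sq, hg]
  have hcs : (∑ i, u i * g i) ^ 2 ≤ (∑ i, u i ^ 2) * ∑ i, g i ^ 2 :=
    Finset.sum_mul_sq_le_sq_mul_sq Finset.univ u g
  have hg0 : (0:ℝ) ≤ ∑ i, g i ^ 2 := Finset.sum_nonneg fun i _ => sq_nonneg _
  have hu1 : (∑ i, u i ^ 2) ≤ 1 := hu
  rw [h1, hgg]
  have : (u ⬝ᵥ g) ^ 2 ≤ ∑ i, g i ^ 2 := by
    have h2 : (∑ i, u i ^ 2) * ∑ i, g i ^ 2 ≤ ∑ i, g i ^ 2 := by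
      nlinarith
    exact le_trans hcs h2
  nlinarith [Real.sq_sqrt hg0, Real.sqrt_nonneg (∑ i, g i ^ 2), le_abs_self (u ⬝ᵥ g),
    sq_abs (u ⬝ᵥ g)]

lemma mem_ell_of_supp (A B C : Matrix (Fin d) (Fin d) ℝ)
    (h : ∀ θ : Fin d → ℝ, Real.sqrt (θ ⬝ᵥ ((A * Aᵀ) *ᵥ θ)) + Real.sqrt (θ ⬝ᵥ ((B * Bᵀ) *ᵥ θ))
      ≤ Real.sqrt (θ ⬝ᵥ ((C * Cᵀ) *ᵥ θ)))
    {u s : Fin d → ℝ} (hu : u ∈ ball2 (Fin d)) (hs : s ∈ ball2 (Fin d)) :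
    A.mulVec u + B.mulVec s ∈ (fun x => C.mulVec x) '' ball2 (Fin d) := by
  by_contra hnot
  obtain ⟨f, c, hS, hx⟩ := geometric_hahn_banach_closed_point (ell_convex C) (ell_isClosed C) hnot
  set θ : Fin d → ℝ := fun i => f (Pi.single i 1) with hθ
  set n := Real.sqrt (θ ⬝ᵥ ((C * Cᵀ) *ᵥ θ)) with hn
  have hfx : f (A.mulVec u + B.mulVec s) ≤ n := by
    rw [f_eq_dot, add_dotProduct]
    exact le_trans (add_le_add (cs_step A θ u hu) (cs_step B θ s hs)) (h θ)
  have hach : ∃ b ∈ (fun x => C.mulVec x) '' ball2 (Fin d), f b = n := by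
    set g := Cᵀ *ᵥ θ with hg
    have hgg : θ ⬝ᵥ ((C * Cᵀ) *ᵥ θ) = g ⬝ᵥ g := quad C θ
    have hg0 : (0:ℝ) ≤ g ⬝ᵥ g := Finset.sum_nonneg fun i _ => mul_self_nonneg _
    rcases eq_or_lt_of_le (Real.sqrt_nonneg (θ ⬝ᵥ ((C * Cᵀ) *ᵥ θ))) with h0 | h0
    · refine ⟨C.mulVec 0, ⟨0, by simp [ball2], rfl⟩, ?_⟩
      rw [Matrix.mulVec_zero, map_zero, hn, ← h0]
    · have hnpos : 0 < n := h0
      have hn2 : n ^ 2 = g ⬝ᵥ g := by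
        rw [hn, Real.sq_sqrt (hgg ▸ hg0 : (0:ℝ) ≤ θ ⬝ᵥ ((C * Cᵀ) *ᵥ θ)), hgg]
      refine ⟨C.mulVec (n⁻¹ • g), ⟨n⁻¹ • g, ?_, rfl⟩, ?_⟩
      · show ∑ i, ((n⁻¹ • g) i) ^ 2 ≤ 1
        have : ∑ i, ((n⁻¹ • g) i) ^ 2 = n⁻¹ ^ 2 * (g ⬝ᵥ g) := by
          simp only [dotProduct, Finset.mul_sum, Pi.smul_apply, smul_eq_mul]
          exact Finset.sum_congr rfl fun i _ => by ring
        rw [this, ← hn2]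
        field_simp
        exact le_rfl
      · rw [f_eq_dot, ← hθ]
        have h1 : (C *ᵥ (n⁻¹ • g)) ⬝ᵥ θ = (n⁻¹ • g) ⬝ᵥ g := by
          rw [dotProduct_comm, Matrix.dotProduct_mulVec, ← Matrix.mulVec_transpose]
          exact dotProduct_comm _ _
        rw [h1, smul_dotProduct, smul_eq_mul, ← hn2, sq]
        field_simp
  obtain ⟨b, hb, hfb⟩ := hach
  have := hS b hb
  rw [hfb] at this
  exact absurd (lt_of_lt_of_le (lt_trans this hx) hfx) (lt_irrefl n)

lemma psd_smul {c : ℝ} (hc : 0 ≤ c) {M : Matrix (Fin d) (Fin d) ℝ} (hM : M.PosSemidef) :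
    (c • M).PosSemidef := by
  constructor
  · rw [Matrix.IsHermitian, Matrix.conjTranspose_smul, hM.1]
    simp
  · intro x
    exact (Matrix.PosSemidef.smul hM hc).2 x

lemma psd_mul_transpose (A : Matrix (Fin d) (Fin d) ℝ) : (A * Aᵀ).PosSemidef := by
  have := Matrix.posSemidef_self_mul_conjTranspose A
  simpa [Matrix.conjTranspose_eq_transpose_of_trivial] using this

open scoped MatrixOrder in
lemma sqrt_mul_sqrt_transpose {M : Matrix (Fin d) (Fin d) ℝ} (hM : M.PosSemidef) :
    ∃ C : Matrix (Fin d) (Fin d) ℝ, C * Cᵀ = M := by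
  refine ⟨CFC.sqrt M, ?_⟩
  have h : (CFC.sqrt M)ᵀ = CFC.sqrt M := by
    have h2 := (CFC.sqrt_nonneg M).posSemidef.1
    rw [Matrix.IsHermitian, Matrix.conjTranspose_eq_transpose_of_trivial] at h2
    exact h2
  rw [h, CFC.sqrt_mul_sqrt_self M hM.nonneg]

/-- The defining set of `Gamma`. -/
def gset (p : ℝ≥0∞) (K : Set (Fin d → ℝ)) : Set ℝ :=
  {r : ℝ | ∃ A : Matrix (Fin d) (Fin d) ℝ,
    r = Real.sqrt (trp (p / 2) (A * Aᵀ)) ∧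
    ∃ v : Fin d → ℝ, (fun x => x + v) '' K ⊆ (fun x => A.mulVec x) '' ball2 (Fin d)}

lemma Gamma_eq_sInf (p : ℝ≥0∞) (K : Set (Fin d → ℝ)) : Gamma p K = sInf (gset p K) := rfl

lemma gset_bddBelow (p : ℝ≥0∞) (K : Set (Fin d → ℝ)) : BddBelow (gset p K) :=
  ⟨0, fun _ hr => hr.choose_spec.1 ▸ Real.sqrt_nonneg _⟩

lemma gset_nonempty (p : ℝ≥0∞) (K : Set (Fin d → ℝ)) (hK : IsBounded K) :
    (gset p K).Nonempty := by
  obtain ⟨c, hc⟩ := isBounded_iff_forall_norm_le.mp hK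
  set R : ℝ := Real.sqrt d * (|c| + 1) + 1 with hR
  have hRpos : 0 < R := by positivity
  have hball : ∀ x ∈ K, ∑ i, x i ^ 2 ≤ R ^ 2 := by
    intro x hx
    have hb : ∀ i, x i ^ 2 ≤ (|c| + 1) ^ 2 := by
      intro i
      have h1 : |x i| ≤ |c| + 1 := by
        calc |x i| = ‖x i‖ := (Real.norm_eq_abs _).symm
          _ ≤ ‖x‖ := norm_le_pi_norm x i
          _ ≤ c := hc x hx
          _ ≤ |c| + 1 := by cases abs_cases c <;> linarith
      calc x i ^ 2 = |x i| ^ 2 := (sq_abs _).symm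
        _ ≤ (|c| + 1) ^ 2 := by nlinarith [abs_nonneg (x i)]
    calc ∑ i, x i ^ 2 ≤ ∑ _i : Fin d, (|c| + 1) ^ 2 := Finset.sum_le_sum fun i _ => hb i
      _ = d * (|c| + 1) ^ 2 := by simp [Finset.sum_const, nsmul_eq_mul]
      _ ≤ R ^ 2 := by
          have hd : Real.sqrt d ^ 2 = d := Real.sq_sqrt (Nat.cast_nonneg d)
          nlinarith [Real.sqrt_nonneg (d : ℝ), abs_nonneg c]
  refine ⟨_, R • (1 : Matrix (Fin d) (Fin d) ℝ), rfl, 0, ?_⟩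
  rintro _ ⟨x, hx, rfl⟩
  refine ⟨R⁻¹ • x, ?_, ?_⟩
  · show ∑ i, ((R⁻¹ • x) i) ^ 2 ≤ 1
    have heq : ∑ i, ((R⁻¹ • x) i) ^ 2 = R⁻¹ ^ 2 * ∑ i, x i ^ 2 := by
      simp only [Finset.mul_sum, Pi.smul_apply, smul_eq_mul]
      exact Finset.sum_congr rfl fun i _ => by ring
    rw [heq]
    have h2 : R⁻¹ ^ 2 * ∑ i, x i ^ 2 ≤ R⁻¹ ^ 2 * R ^ 2 :=
      mul_le_mul_of_nonneg_left (hball x hx) (by positivity)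
    have h3 : R⁻¹ ^ 2 * R ^ 2 = 1 := by field_simp
    linarith
  · show (R • (1 : Matrix (Fin d) (Fin d) ℝ)) *ᵥ (R⁻¹ • x) = x + 0
    rw [Matrix.smul_mulVec, Matrix.one_mulVec, smul_smul,
      mul_inv_cancel₀ hRpos.ne', one_smul, add_zero]

end Aux

set_option maxHeartbeats 1000000 in
/-- Triangle inequality for `Γ_p` with respect to Minkowski sums. -/
theorem Gamma_add_le {d : ℕ} (p : ℝ≥0∞) (hp : 2 ≤ p) (K L : Set (Fin d → ℝ))
    (hK : IsBounded K) (hL : IsBounded L) :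
    Gamma p (K + L) ≤ Gamma p K + Gamma p L := by
  haveI hfq : Fact (1 ≤ p / 2) := ⟨by
    have h2 : (2:ℝ≥0∞) / 2 = 1 := ENNReal.div_self (by norm_num) (by norm_num)
    calc (1:ℝ≥0∞) = 2 / 2 := h2.symm
      _ ≤ p / 2 := ENNReal.div_le_div_right hp 2⟩
  refine le_of_forall_pos_le_add fun ε hε => ?_
  obtain ⟨rA, hrAmem, hrA⟩ :=
    Real.lt_sInf_add_pos (gset_nonempty p K hK) (show (0:ℝ) < ε / 4 by linarith)
  obtain ⟨rB, hrBmem, hrB⟩ :=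
    Real.lt_sInf_add_pos (gset_nonempty p L hL) (show (0:ℝ) < ε / 4 by linarith)
  obtain ⟨A, hAr, v, hAcont⟩ := hrAmem
  obtain ⟨B, hBr, w, hBcont⟩ := hrBmem
  set α := Real.sqrt (trp (p / 2) (A * Aᵀ)) with hα
  set β := Real.sqrt (trp (p / 2) (B * Bᵀ)) with hβ
  have hα0 : 0 ≤ α := Real.sqrt_nonneg _
  have hβ0 : 0 ≤ β := Real.sqrt_nonneg _
  set δ : ℝ := ε / 8 with hδ
  have hδ0 : 0 < δ := by rw [hδ]; linarith
  set t : ℝ := (β + δ) / (α + δ) with ht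
  have ht0 : 0 < t := div_pos (by linarith) (by linarith)
  have h1t : (0:ℝ) ≤ 1 + t := by linarith
  have h1t' : (0:ℝ) ≤ 1 + t⁻¹ := by positivity
  set M : Matrix (Fin d) (Fin d) ℝ := (1 + t) • (A * Aᵀ) + (1 + t⁻¹) • (B * Bᵀ) with hMdef
  have hMpsd : M.PosSemidef :=
    (psd_smul h1t (psd_mul_transpose A)).add (psd_smul h1t' (psd_mul_transpose B))
  obtain ⟨C, hCt⟩ : ∃ C : Matrix (Fin d) (Fin d) ℝ, C * Cᵀ = M :=
    sqrt_mul_sqrt_transpose hMpsd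
  -- quadratic form identity
  have hquadM : ∀ θ : Fin d → ℝ, θ ⬝ᵥ ((C * Cᵀ) *ᵥ θ)
      = (1 + t) * (θ ⬝ᵥ ((A * Aᵀ) *ᵥ θ)) + (1 + t⁻¹) * (θ ⬝ᵥ ((B * Bᵀ) *ᵥ θ)) := by
    intro θ
    rw [hCt, hMdef]
    rw [Matrix.add_mulVec, dotProduct_add, Matrix.smul_mulVec,
      Matrix.smul_mulVec, dotProduct_smul, dotProduct_smul,
      smul_eq_mul, smul_eq_mul]
  -- support inequality
  have hsupp : ∀ θ : Fin d → ℝ,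
      Real.sqrt (θ ⬝ᵥ ((A * Aᵀ) *ᵥ θ)) + Real.sqrt (θ ⬝ᵥ ((B * Bᵀ) *ᵥ θ))
        ≤ Real.sqrt (θ ⬝ᵥ ((C * Cᵀ) *ᵥ θ)) := by
    intro θ
    set a := Real.sqrt (θ ⬝ᵥ ((A * Aᵀ) *ᵥ θ)) with ha
    set b := Real.sqrt (θ ⬝ᵥ ((B * Bᵀ) *ᵥ θ)) with hb
    have ha0 : 0 ≤ a := Real.sqrt_nonneg _
    have hb0 : 0 ≤ b := Real.sqrt_nonneg _
    have ha2 : a ^ 2 = θ ⬝ᵥ ((A * Aᵀ) *ᵥ θ) := Real.sq_sqrt (quad_nonneg A θ)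
    have hb2 : b ^ 2 = θ ⬝ᵥ ((B * Bᵀ) *ᵥ θ) := Real.sq_sqrt (quad_nonneg B θ)
    refine Real.le_sqrt_of_sq_le ?_
    rw [hquadM θ, ← ha2, ← hb2]
    have key : 2 * a * b ≤ t * a ^ 2 + b ^ 2 / t := by
      have hmul : b ^ 2 / t * t = b ^ 2 := div_mul_cancel₀ _ ht0.ne'
      nlinarith [sq_nonneg (t * a - b), ht0, mul_pos ht0 ht0]
    have : b ^ 2 / t = t⁻¹ * b ^ 2 := by rw [div_eq_mul_inv]; ring
    nlinarith [key]
  -- bound on the trace functional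
  have htrA0 : 0 ≤ trp (p / 2) (A * Aᵀ) := pnorm_nonneg _ _
  have htrB0 : 0 ≤ trp (p / 2) (B * Bᵀ) := pnorm_nonneg _ _
  have hα2 : α ^ 2 = trp (p / 2) (A * Aᵀ) := Real.sq_sqrt htrA0
  have hβ2 : β ^ 2 = trp (p / 2) (B * Bᵀ) := Real.sq_sqrt htrB0
  have htrp : trp (p / 2) (C * Cᵀ)
      ≤ (1 + t) * trp (p / 2) (A * Aᵀ) + (1 + t⁻¹) * trp (p / 2) (B * Bᵀ) := by
    have hdiag : (fun i => (C * Cᵀ) i i)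
        = fun i => (1 + t) * (A * Aᵀ) i i + (1 + t⁻¹) * (B * Bᵀ) i i := by
      funext i
      rw [hCt, hMdef]
      simp [Matrix.add_apply, Matrix.smul_apply, smul_eq_mul]
    show pnorm (p / 2) (fun i => (C * Cᵀ) i i) ≤ _
    rw [hdiag]
    exact pnorm_combine (p / 2) h1t h1t' _ _
  -- numeric bound
  have hfinal : Real.sqrt (trp (p / 2) (C * Cᵀ)) ≤ α + β + 2 * δ := by
    have h1 : t * α ^ 2 ≤ (β + δ) * (α + δ) := by
      rw [ht, div_mul_eq_mul_div, div_le_iff₀ (by linarith : (0:ℝ) < α + δ)]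
      have hsq : (0:ℝ) ≤ (α + δ) ^ 2 - α ^ 2 := by nlinarith
      nlinarith [mul_nonneg (show (0:ℝ) ≤ β + δ by linarith) hsq]
    have h2 : t⁻¹ * β ^ 2 ≤ (α + δ) * (β + δ) := by
      have htinv : t⁻¹ = (α + δ) / (β + δ) := by rw [ht, inv_div]
      rw [htinv, div_mul_eq_mul_div, div_le_iff₀ (by linarith : (0:ℝ) < β + δ)]
      have hsq : (0:ℝ) ≤ (β + δ) ^ 2 - β ^ 2 := by nlinarith
      nlinarith [mul_nonneg (show (0:ℝ) ≤ α + δ by linarith) hsq]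
    have hle : trp (p / 2) (C * Cᵀ) ≤ (α + β + 2 * δ) ^ 2 := by
      have := htrp
      rw [← hα2, ← hβ2] at this
      nlinarith
    calc Real.sqrt (trp (p / 2) (C * Cᵀ)) ≤ Real.sqrt ((α + β + 2 * δ) ^ 2) :=
          Real.sqrt_le_sqrt hle
      _ = α + β + 2 * δ := Real.sqrt_sq (by linarith)
  -- membership
  have hmem : Real.sqrt (trp (p / 2) (C * Cᵀ)) ∈ gset p (K + L) := by
    refine ⟨C, rfl, v + w, ?_⟩
    rintro _ ⟨z, hz, rfl⟩
    rcases Set.mem_add.mp hz with ⟨x, hx, y, hy, rfl⟩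
    obtain ⟨u, hu, hux⟩ := hAcont ⟨x, hx, rfl⟩
    obtain ⟨s, hs, hsy⟩ := hBcont ⟨y, hy, rfl⟩
    have hux' : A *ᵥ u = x + v := hux
    have hsy' : B *ᵥ s = y + w := hsy
    have hrw : (fun x => x + (v + w)) (x + y) = A.mulVec u + B.mulVec s := by
      show x + y + (v + w) = A.mulVec u + B.mulVec s
      rw [show A.mulVec u = x + v from hux', show B.mulVec s = y + w from hsy']
      abel
    rw [hrw]
    exact mem_ell_of_supp A B C hsupp hu hs
  have hGle : Gamma p (K + L) ≤ Real.sqrt (trp (p / 2) (C * Cᵀ)) := by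
    rw [Gamma_eq_sInf]
    exact csInf_le (gset_bddBelow p (K + L)) hmem
  have hrA' : α < Gamma p K + ε / 4 := by
    rw [Gamma_eq_sInf]; exact lt_of_eq_of_lt hAr.symm hrA
  have hrB' : β < Gamma p L + ε / 4 := by
    rw [Gamma_eq_sInf]; exact lt_of_eq_of_lt hBr.symm hrB
  have : Gamma p (K + L) ≤ α + β + 2 * δ := le_trans hGle hfinal
  rw [hδ] at this
  linarith
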